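/- Let ~ be the equivalence relation on 𝓒(X) generated by connectedness. The assignment sending M ∈ 𝓒(X) to the dihomotopy class in X of any total directed path of X_M is well defined and induces a bijection between the set of equivalence classes of 𝓒(X) under ~ (the connected components of the index poset) and the set of dihomotopy classes of total directed paths in X (the schedulings of X). -/

import Mathlib

open Set

/-- A directed path in `Y ⊆ ℝⁿ`: a continuous map from the unit interval, all of whose
coordinate functions are monotone nondecreasing, with values in `Y`. -/
def IsDiPath (n : ℕ) (Y : Set (Fin n → ℝ)) (p : unitInterval → Fin n → ℝ) : Prop :=
  Continuous p ∧ (∀ t, p t ∈ Y) ∧ ∀ j : Fin n, Monotone fun t => p t j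

/-- A total directed path goes from `(0,…,0)` to `(1,…,1)`. -/
def IsTotalDiPath (n : ℕ) (Y : Set (Fin n → ℝ)) (p : unitInterval → Fin n → ℝ) : Prop :=
  IsDiPath n Y p ∧ p 0 = (fun _ => (0:ℝ)) ∧ p 1 = (fun _ => (1:ℝ))

/-- The unit cube `[0,1]^n`. -/
def cube (n : ℕ) : Set (Fin n → ℝ) := {z | ∀ j, z j ∈ Icc (0:ℝ) 1}

/-- `M` has no zero row. -/
def NoZeroRow {l n : ℕ} (M : Fin l → Fin n → Bool) : Prop := ∀ i, ∃ j, M i j = true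

/-- Every column of `M` contains exactly one `1`. -/
def ColUnit {l n : ℕ} (M : Fin l → Fin n → Bool) : Prop := ∀ j, ∃! i, M i j = true

/-- Entrywise order on boolean matrices. -/
def matLE {l n : ℕ} (M N : Fin l → Fin n → Bool) : Prop := ∀ i j, M i j = true → N i j = true

/-- The extended hole `R̃^i_j = ∏_{j'<j} [0,y^i_{j'}) × (x^i_j, y^i_j) × ∏_{j'>j} [0,y^i_{j'})`. -/
def extHole {l n : ℕ} (x y : Fin l → Fin n → ℝ) (i : Fin l) (j : Fin n) : Set (Fin n → ℝ) :=
  {z | z j ∈ Ioo (x i j) (y i j) ∧ ∀ j', j' ≠ j → z j' ∈ Ico (0:ℝ) (y i j')}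

/-- `X_M = [0,1]^n \ ⋃_{(i,j) : M(i,j)=1} R̃^i_j`. -/
def XM {l n : ℕ} (x y : Fin l → Fin n → ℝ) (M : Fin l → Fin n → Bool) : Set (Fin n → ℝ) :=
  cube n \ ⋃ (i : Fin l) (j : Fin n) (_ : M i j = true), extHole x y i j

/-- `M` is dead if `X_M` contains no total directed path. -/
def Dead {l n : ℕ} (x y : Fin l → Fin n → ℝ) (M : Fin l → Fin n → Bool) : Prop :=
  ¬ ∃ p, IsTotalDiPath n (XM x y M) p

/-- `X = [0,1]^n \ ⋃_i R^i` where `R^i = ∏_j (x^i_j, y^i_j)`. -/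
def Xfull {l n : ℕ} (x y : Fin l → Fin n → ℝ) : Set (Fin n → ℝ) :=
  cube n \ ⋃ i : Fin l, {z | ∀ j, z j ∈ Ioo (x i j) (y i j)}

/-- Elementary dihomotopy of directed paths with fixed common endpoints in `Y`. -/
def ElemDihomotopic (n : ℕ) (Y : Set (Fin n → ℝ)) (p q : unitInterval → Fin n → ℝ) : Prop :=
  IsDiPath n Y p ∧ IsDiPath n Y q ∧ p 0 = q 0 ∧ p 1 = q 1 ∧
  ∃ H : unitInterval → unitInterval → Fin n → ℝ,
    Continuous (fun tu : unitInterval × unitInterval => H tu.1 tu.2) ∧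
    H 0 = p ∧ H 1 = q ∧ (∀ t, IsDiPath n Y (H t)) ∧
    ∀ (u : unitInterval) (j : Fin n), Monotone fun t => H t u j

/-- Dihomotopy: equivalence relation generated by elementary dihomotopy. -/
def Dihomotopic (n : ℕ) (Y : Set (Fin n → ℝ)) :
    (unitInterval → Fin n → ℝ) → (unitInterval → Fin n → ℝ) → Prop :=
  Relation.EqvGen (ElemDihomotopic n Y)

/-- Two matrices are connected when their entrywise minimum has no zero row. -/
def MatConnected {l n : ℕ} (M N : Fin l → Fin n → Bool) : Prop :=
  ∀ i, ∃ j, M i j = true ∧ N i j = true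

section Aux
variable {l n : ℕ}

lemma mem_XM_iff {x y : Fin l → Fin n → ℝ} {M : Fin l → Fin n → Bool} {z : Fin n → ℝ} :
    z ∈ XM x y M ↔ z ∈ cube n ∧ ∀ i j, M i j = true → z ∉ extHole x y i j := by
  simp only [XM, mem_diff, mem_iUnion, not_exists]


lemma XM_antitone {x y : Fin l → Fin n → ℝ} {M N : Fin l → Fin n → Bool} (h : matLE M N) :
    XM x y N ⊆ XM x y M := by
  intro z hz
  rw [mem_XM_iff] at hz ⊢
  exact ⟨hz.1, fun i j hij => hz.2 i j (h i j hij)⟩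

lemma XM_subset_Xfull {x y : Fin l → Fin n → ℝ} {M : Fin l → Fin n → Bool}
    (hM : NoZeroRow M) : XM x y M ⊆ Xfull x y := by
  intro z hz
  rw [mem_XM_iff] at hz
  refine ⟨hz.1, fun hmem => ?_⟩
  simp only [mem_iUnion, mem_setOf_eq] at hmem
  obtain ⟨i, hi⟩ := hmem
  obtain ⟨j, hj⟩ := hM i
  exact hz.2 i j hj ⟨hi j, fun j' _ => ⟨(hz.1 j').1, (hi j').2⟩⟩

lemma max_mem_XM {x y : Fin l → Fin n → ℝ} {M : Fin l → Fin n → Bool} {z w : Fin n → ℝ}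
    (hz : z ∈ XM x y M) (hw : w ∈ XM x y M) : (fun j => max (z j) (w j)) ∈ XM x y M := by
  rw [mem_XM_iff] at hz hw ⊢
  refine ⟨fun j => ⟨le_max_of_le_left (hz.1 j).1, max_le (hz.1 j).2 (hw.1 j).2⟩, ?_⟩
  intro i j hMij hmem
  obtain ⟨hIoo, hIco⟩ := hmem
  simp only [mem_Ioo] at hIoo
  rcases le_total (w j) (z j) with hle | hle
  · have hj : max (z j) (w j) = z j := max_eq_left hle
    rw [hj] at hIoo
    exact hz.2 i j hMij ⟨hIoo, fun j' hj' =>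
      ⟨(hz.1 j').1, lt_of_le_of_lt (le_max_left _ _) (hIco j' hj').2⟩⟩
  · have hj : max (z j) (w j) = w j := max_eq_right hle
    rw [hj] at hIoo
    exact hw.2 i j hMij ⟨hIoo, fun j' hj' =>
      ⟨(hw.1 j').1, lt_of_le_of_lt (le_max_right _ _) (hIco j' hj').2⟩⟩

end Aux

section Aux2
variable {l n : ℕ}

lemma isDiPath_mono {Y Z : Set (Fin n → ℝ)} {p} (h : IsDiPath n Y p) (hYZ : Y ⊆ Z) :
    IsDiPath n Z p := ⟨h.1, fun t => hYZ (h.2.1 t), h.2.2⟩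

lemma isTotalDiPath_mono {Y Z : Set (Fin n → ℝ)} {p} (h : IsTotalDiPath n Y p) (hYZ : Y ⊆ Z) :
    IsTotalDiPath n Z p := ⟨isDiPath_mono h.1 hYZ, h.2⟩

lemma elemDihomotopic_mono {Y Z : Set (Fin n → ℝ)} {p q} (h : ElemDihomotopic n Y p q)
    (hYZ : Y ⊆ Z) : ElemDihomotopic n Z p q := by
  obtain ⟨h1, h2, h3, h4, H, hc, h0, hH1, hd, hm⟩ := h
  exact ⟨isDiPath_mono h1 hYZ, isDiPath_mono h2 hYZ, h3, h4, H, hc, h0, hH1,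
    fun t => isDiPath_mono (hd t) hYZ, hm⟩

lemma dihomotopic_mono {Y Z : Set (Fin n → ℝ)} {p q} (h : Dihomotopic n Y p q)
    (hYZ : Y ⊆ Z) : Dihomotopic n Z p q := by
  induction h with
  | rel a b hab => exact Relation.EqvGen.rel _ _ (elemDihomotopic_mono hab hYZ)
  | refl a => exact Relation.EqvGen.refl a
  | symm a b _ ih => exact Relation.EqvGen.symm _ _ ih
  | trans a b c _ _ ih1 ih2 => exact Relation.EqvGen.trans _ _ _ ih1 ih2

/-- product map on the unit interval -/
def imul (t u : unitInterval) : unitInterval :=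
  ⟨(t:ℝ) * u, ⟨mul_nonneg t.2.1 u.2.1, by nlinarith [t.2.1, t.2.2, u.2.1, u.2.2]⟩⟩

lemma imul_zero_left (u : unitInterval) : imul 0 u = 0 := by
  simp [imul]

lemma imul_one_left (u : unitInterval) : imul 1 u = u := by
  simp [imul]

lemma imul_cont : Continuous fun tu : unitInterval × unitInterval => imul tu.1 tu.2 := by
  apply Continuous.subtype_mk
  exact (continuous_fst.subtype_val).mul (continuous_snd.subtype_val)

lemma imul_mono_left (u : unitInterval) : Monotone fun t => imul t u := by
  intro t t' h
  simp only [imul, Subtype.mk_le_mk]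
  exact mul_le_mul_of_nonneg_right (Subtype.coe_le_coe.2 h) u.2.1

lemma imul_mono_right (t : unitInterval) : Monotone fun u => imul t u := by
  intro u u' h
  simp only [imul, Subtype.mk_le_mk]
  exact mul_le_mul_of_nonneg_left (Subtype.coe_le_coe.2 h) t.2.1

lemma elem_to_max {Y : Set (Fin n → ℝ)}
    (hmax : ∀ z w, z ∈ Y → w ∈ Y → (fun j => max (z j) (w j)) ∈ Y)
    (hY0 : ∀ z ∈ Y, ∀ j, 0 ≤ z j)
    {p q} (hp : IsTotalDiPath n Y p) (hq : IsTotalDiPath n Y q) :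
    ElemDihomotopic n Y p (fun u j => max (p u j) (q u j)) := by
  obtain ⟨⟨hpc, hpm, hpmon⟩, hp0, hp1⟩ := hp
  obtain ⟨⟨hqc, hqm, hqmon⟩, hq0, hq1⟩ := hq
  have hmc : Continuous fun u => (fun j => max (p u j) (q u j)) :=
    continuous_pi fun j => ((continuous_apply j).comp hpc).max ((continuous_apply j).comp hqc)
  refine ⟨⟨hpc, hpm, hpmon⟩,
    ⟨hmc, fun u => hmax _ _ (hpm u) (hqm u), fun j => (hpmon j).max (hqmon j)⟩,
    ?_, ?_, fun t u j => max (p u j) (q (imul t u) j), ?_, ?_, ?_, ?_, ?_⟩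
  · funext j; simp [hp0, hq0]
  · funext j; simp [hp1, hq1]
  · exact continuous_pi fun j =>
      ((continuous_apply j).comp (hpc.comp continuous_snd)).max
        ((continuous_apply j).comp (hqc.comp imul_cont))
  · funext u j
    show p u j ⊔ q (imul 0 u) j = p u j
    rw [imul_zero_left, hq0]
    exact max_eq_left (hY0 _ (hpm u) j)
  · funext u j
    show p u j ⊔ q (imul 1 u) j = p u j ⊔ q u j
    rw [imul_one_left]
  · intro t
    refine ⟨continuous_pi fun j => ((continuous_apply j).comp hpc).max
      ((continuous_apply j).comp (hqc.comp (imul_cont.comp (Continuous.prodMk_right t)))), ?_, ?_⟩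
    · exact fun u => hmax _ _ (hpm u) (hqm _)
    · intro j
      exact (hpmon j).max ((hqmon j).comp (imul_mono_right t))
  · intro u j
    exact monotone_const.max ((hqmon j).comp (imul_mono_left u))

lemma dihomotopic_of_XM {x y : Fin l → Fin n → ℝ} {M : Fin l → Fin n → Bool}
    {p q} (hp : IsTotalDiPath n (XM x y M) p) (hq : IsTotalDiPath n (XM x y M) q) :
    Dihomotopic n (XM x y M) p q := by
  have hmax : ∀ z w, z ∈ XM x y M → w ∈ XM x y M → (fun j => max (z j) (w j)) ∈ XM x y M :=
    fun z w hz hw => max_mem_XM hz hw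
  have hY0 : ∀ z ∈ XM x y M, ∀ j, 0 ≤ z j := fun z hz j => ((mem_XM_iff.1 hz).1 j).1
  have h1 := elem_to_max hmax hY0 hp hq
  have h2 := elem_to_max hmax hY0 hq hp
  have hcomm : (fun u j => max (q u j) (p u j)) = fun u j => max (p u j) (q u j) := by
    funext u j; exact max_comm _ _
  rw [hcomm] at h2
  exact Relation.EqvGen.trans _ _ _ (Relation.EqvGen.rel _ _ h1)
    (Relation.EqvGen.symm _ _ (Relation.EqvGen.rel _ _ h2))

end Aux2

section Aux3
variable {l n : ℕ}

lemma exists_witness {x y : Fin l → Fin n → ℝ} (hn : 1 ≤ n)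
    (hx : ∀ i j, 0 < x i j) (hxy : ∀ i j, x i j < y i j) (hy1 : ∀ i j, y i j < 1)
    {p} (hp : IsTotalDiPath n (Xfull x y) p) (i : Fin l) :
    ∃ (u : unitInterval) (j k : Fin n), j ≠ k ∧ p u j ≤ x i j ∧ y i k ≤ p u k := by
  obtain ⟨⟨hpc, hpm, hpmon⟩, hp0, hp1⟩ := hp
  set A : Set unitInterval := {u | ∃ k, y i k ≤ p u k} with hA
  have hAclosed : IsClosed A := by
    have : A = ⋃ k, {u | y i k ≤ p u k} := by ext u; simp [hA]
    rw [this]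
    exact isClosed_iUnion_of_finite fun k =>
      isClosed_le continuous_const ((continuous_apply k).comp hpc)
  set S : Set ℝ := (fun u : unitInterval => (u : ℝ)) '' A with hS
  have hScl : IsClosed S := (hAclosed.isCompact.image continuous_subtype_val).isClosed
  have hSne : S.Nonempty := by
    refine ⟨1, ⟨1, ⟨⟨0, hn⟩, ?_⟩, rfl⟩⟩
    rw [hp1]
    exact le_of_lt (hy1 i _)
  have hbdd : BddBelow S := ⟨0, fun t ht => by obtain ⟨u, _, rfl⟩ := ht; exact u.2.1⟩
  have hTS : sInf S ∈ S := hScl.csInf_mem hSne hbdd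
  obtain ⟨U, hUA, hUT⟩ := hTS
  have hUT' : (U:ℝ) = sInf S := hUT
  obtain ⟨k, hk⟩ := hUA
  have hT0 : (0:ℝ) < sInf S := by
    rcases lt_or_ge 0 (sInf S) with h | h
    · exact h
    · exfalso
      have hU0 : U = 0 := by
        apply Subtype.ext
        have h0 : (U:ℝ) ≤ 0 := by rw [hUT']; exact h
        exact le_antisymm h0 U.2.1
      rw [hU0, hp0] at hk
      exact absurd hk (not_le.2 (lt_trans (hx i k) (hxy i k)))
  have hj : ∃ j, p U j ≤ x i j := by
    by_contra hcon
    push_neg at hcon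
    -- continuity argument
    set g : ℝ → Fin n → ℝ := fun t => p (projIcc 0 1 zero_le_one t) with hg
    have hgc : Continuous g := hpc.comp continuous_projIcc
    set V : Set ℝ := ⋂ j, {t | x i j < g t j} with hV
    have hVopen : IsOpen V := isOpen_iInter_of_finite fun j =>
      isOpen_lt continuous_const ((continuous_apply j).comp hgc)
    have hTmem : sInf S ∈ Icc (0:ℝ) 1 := by rw [← hUT']; exact U.2
    have hproj : projIcc 0 1 zero_le_one (sInf S) = U := by
      rw [projIcc_of_mem zero_le_one hTmem]
      exact Subtype.ext hUT'.symm
    have hTV : sInf S ∈ V := by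
      refine mem_iInter.2 fun j => ?_
      show x i j < g (sInf S) j
      rw [hg]
      simp only [hproj]
      exact hcon j
    obtain ⟨a, b, hab, hsub⟩ := mem_nhds_iff_exists_Ioo_subset.1 (hVopen.mem_nhds hTV)
    set t : ℝ := (max a 0 + sInf S) / 2 with ht
    have hat : max a 0 < sInf S := max_lt hab.1 hT0
    have ht1 : max a 0 < t := by rw [ht]; linarith
    have ht2 : t < sInf S := by rw [ht]; linarith
    have htIoo : t ∈ Ioo a b := ⟨lt_of_le_of_lt (le_max_left a 0) ht1, lt_trans ht2 hab.2⟩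
    have htI : t ∈ Icc (0:ℝ) 1 :=
      ⟨le_of_lt (lt_of_le_of_lt (le_max_right a 0) ht1), le_trans (le_of_lt ht2) hTmem.2⟩
    set w : unitInterval := ⟨t, htI⟩ with hw
    have hgw : g t = p w := by
      rw [hg]; simp only [projIcc_of_mem zero_le_one htI]; rfl
    have hwx : ∀ j, x i j < p w j := by
      intro j
      have h' := mem_iInter.1 (hsub htIoo) j
      simp only [mem_setOf_eq, hgw] at h'
      exact h'
    have hwy : ∀ j, p w j < y i j := by
      intro j
      by_contra hcon2
      push_neg at hcon2
      have : (w : ℝ) ∈ S := ⟨w, ⟨j, hcon2⟩, rfl⟩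
      have := csInf_le hbdd this
      exact absurd this (not_le.2 ht2)
    have := (hpm w).2
    apply this
    exact mem_iUnion.2 ⟨i, fun j => ⟨hwx j, hwy j⟩⟩
  obtain ⟨j, hjle⟩ := hj
  refine ⟨U, j, k, ?_, hjle, hk⟩
  intro hjkeq
  rw [hjkeq] at hjle
  exact absurd hk (not_le.2 (lt_of_le_of_lt hjle (hxy i k)))

lemma avoid_of_witness {x y : Fin l → Fin n → ℝ} {p : unitInterval → Fin n → ℝ}
    (hmono : ∀ j, Monotone fun t => p t j)
    {u : unitInterval} {i : Fin l} {j k : Fin n} (hjk : j ≠ k)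
    (h1 : p u j ≤ x i j) (h2 : y i k ≤ p u k) :
    ∀ v, p v ∉ extHole x y i j := by
  intro v hv
  rcases le_total v u with h | h
  · exact absurd hv.1.1 (not_lt.2 ((hmono j h).trans h1))
  · exact absurd (hv.2 k (Ne.symm hjk)).2 (not_lt.2 (h2.trans (hmono k h)))

open Classical in
noncomputable def phiMat (x y : Fin l → Fin n → ℝ) (p : unitInterval → Fin n → ℝ) :
    Fin l → Fin n → Bool :=
  fun i j => decide (∀ u, p u ∉ extHole x y i j)

lemma phiMat_true_iff {x y : Fin l → Fin n → ℝ} {p : unitInterval → Fin n → ℝ}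
    {i : Fin l} {j : Fin n} :
    phiMat x y p i j = true ↔ ∀ u, p u ∉ extHole x y i j := by
  simp [phiMat]

lemma totalDiPath_XM_phi {x y : Fin l → Fin n → ℝ} {p}
    (hp : IsTotalDiPath n (Xfull x y) p) :
    IsTotalDiPath n (XM x y (phiMat x y p)) p := by
  refine ⟨⟨hp.1.1, fun t => ?_, hp.1.2.2⟩, hp.2⟩
  rw [mem_XM_iff]
  exact ⟨(hp.1.2.1 t).1, fun i j hij => (phiMat_true_iff.1 hij) t⟩

lemma noZeroRow_phi {x y : Fin l → Fin n → ℝ} (hn : 1 ≤ n)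
    (hx : ∀ i j, 0 < x i j) (hxy : ∀ i j, x i j < y i j) (hy1 : ∀ i j, y i j < 1)
    {p} (hp : IsTotalDiPath n (Xfull x y) p) : NoZeroRow (phiMat x y p) := by
  intro i
  obtain ⟨u, j, k, hjk, h1, h2⟩ := exists_witness hn hx hxy hy1 hp i
  exact ⟨j, phiMat_true_iff.2 (avoid_of_witness hp.1.2.2 hjk h1 h2)⟩

end Aux3

section Aux4
variable {l n : ℕ}

lemma step_quot {x y : Fin l → Fin n → ℝ} (hn : 1 ≤ n)
    (hx : ∀ i j, 0 < x i j) (hxy : ∀ i j, x i j < y i j) (hy1 : ∀ i j, y i j < 1)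
    {p q} (hpq : ElemDihomotopic n (Xfull x y) p q) (hp : IsTotalDiPath n (Xfull x y) p)
    (h1 : NoZeroRow (phiMat x y p) ∧ ∃ r, IsTotalDiPath n (XM x y (phiMat x y p)) r)
    (h2 : NoZeroRow (phiMat x y q) ∧ ∃ r, IsTotalDiPath n (XM x y (phiMat x y q)) r) :
    Quot.mk (fun M N : {M : Fin l → Fin n → Bool //
        NoZeroRow M ∧ ∃ r, IsTotalDiPath n (XM x y M) r} => MatConnected M.1 N.1)
      ⟨phiMat x y p, h1⟩ =
    Quot.mk (fun M N : {M : Fin l → Fin n → Bool //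
        NoZeroRow M ∧ ∃ r, IsTotalDiPath n (XM x y M) r} => MatConnected M.1 N.1)
      ⟨phiMat x y q, h2⟩ := by
  obtain ⟨hpd, hqd, he0, he1, H, hHc, hH0, hH1, hHd, hHm⟩ := hpq
  have hq : IsTotalDiPath n (Xfull x y) q :=
    ⟨hqd, by rw [← he0]; exact hp.2.1, by rw [← he1]; exact hp.2.2⟩
  have hHtot : ∀ t, IsTotalDiPath n (Xfull x y) (H t) := by
    intro t
    refine ⟨hHd t, funext fun j => ?_, funext fun j => ?_⟩
    · show H t 0 j = 0
      have ha : H t 0 j ≤ H 1 0 j := hHm 0 j unitInterval.le_one'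
      have hb : H 0 0 j ≤ H t 0 j := hHm 0 j unitInterval.nonneg'
      rw [hH1, hq.2.1] at ha
      rw [hH0, hp.2.1] at hb
      exact le_antisymm ha hb
    · show H t 1 j = 1
      have ha : H t 1 j ≤ H 1 1 j := hHm 1 j unitInterval.le_one'
      have hb : H 0 1 j ≤ H t 1 j := hHm 1 j unitInterval.nonneg'
      rw [hH1, hq.2.2] at ha
      rw [hH0, hp.2.2] at hb
      exact le_antisymm ha hb
  have hmem : ∀ t, NoZeroRow (phiMat x y (H t)) ∧
      ∃ r, IsTotalDiPath n (XM x y (phiMat x y (H t))) r :=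
    fun t => ⟨noZeroRow_phi hn hx hxy hy1 (hHtot t), ⟨H t, totalDiPath_XM_phi (hHtot t)⟩⟩
  set D : unitInterval → Quot (fun M N : {M : Fin l → Fin n → Bool //
      NoZeroRow M ∧ ∃ r, IsTotalDiPath n (XM x y M) r} => MatConnected M.1 N.1) :=
    fun t => Quot.mk _ ⟨phiMat x y (H t), hmem t⟩ with hD
  -- the avoidance witness sets
  set C : Fin l → Fin n → Set unitInterval := fun i j =>
    {t | ∃ (u : unitInterval) (k : Fin n), k ≠ j ∧ H t u j ≤ x i j ∧ y i k ≤ H t u k} with hC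
  have hCclosed : ∀ i j, IsClosed (C i j) := by
    intro i j
    have himg : C i j = Prod.fst '' {tu : unitInterval × unitInterval |
        ∃ k, k ≠ j ∧ H tu.1 tu.2 j ≤ x i j ∧ y i k ≤ H tu.1 tu.2 k} := by
      ext t
      constructor
      · rintro ⟨u, k, hk, ha, hb⟩
        exact ⟨(t, u), ⟨k, hk, ha, hb⟩, rfl⟩
      · rintro ⟨⟨t', u⟩, ⟨k, hk, ha, hb⟩, rfl⟩
        exact ⟨u, k, hk, ha, hb⟩
    rw [himg]
    apply isClosedMap_fst_of_compactSpace
    have hsplit : {tu : unitInterval × unitInterval |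
        ∃ k, k ≠ j ∧ H tu.1 tu.2 j ≤ x i j ∧ y i k ≤ H tu.1 tu.2 k} =
        ⋃ k, {tu : unitInterval × unitInterval |
          k ≠ j ∧ H tu.1 tu.2 j ≤ x i j ∧ y i k ≤ H tu.1 tu.2 k} := by
      ext tu; simp
    rw [hsplit]
    refine isClosed_iUnion_of_finite fun k => ?_
    by_cases hkj : k = j
    · convert isClosed_empty
      ext tu; simp [hkj]
    · have hre : {tu : unitInterval × unitInterval |
          k ≠ j ∧ H tu.1 tu.2 j ≤ x i j ∧ y i k ≤ H tu.1 tu.2 k} =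
          {tu : unitInterval × unitInterval | H tu.1 tu.2 j ≤ x i j} ∩
          {tu : unitInterval × unitInterval | y i k ≤ H tu.1 tu.2 k} := by
        ext tu; simp [hkj]
      rw [hre]
      exact (isClosed_le ((continuous_apply j).comp hHc) continuous_const).inter
        (isClosed_le continuous_const ((continuous_apply k).comp hHc))
  have hCcover : ∀ (i : Fin l) (t : unitInterval), ∃ j, t ∈ C i j := by
    intro i t
    obtain ⟨u, j, k, hjk, hle, hge⟩ := exists_witness hn hx hxy hy1 (hHtot t) i
    exact ⟨j, u, k, Ne.symm hjk, hle, hge⟩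
  have hCavoid : ∀ (i : Fin l) (j : Fin n) (t : unitInterval), t ∈ C i j →
      ∀ v, H t v ∉ extHole x y i j := by
    rintro i j t ⟨u, k, hkj, ha, hb⟩
    exact avoid_of_witness (hHd t).2.2 (Ne.symm hkj) ha hb
  have hloc : IsLocallyConstant D := by
    rw [IsLocallyConstant.iff_exists_open]
    intro t₀
    refine ⟨⋂ i, (⋃ j ∈ {j | t₀ ∉ C i j}, C i j)ᶜ, ?_, ?_, ?_⟩
    · exact isOpen_iInter_of_finite fun i =>
        (Set.Finite.isClosed_biUnion (Set.toFinite _) (fun j _ => hCclosed i j)).isOpen_compl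
    · refine mem_iInter.2 fun i hmem' => ?_
      obtain ⟨j, hj, hmemC⟩ := mem_iUnion₂.1 hmem'
      exact hj hmemC
    · intro t ht
      apply Quot.sound
      intro i
      obtain ⟨j, hj⟩ := hCcover i t
      have hj0 : t₀ ∈ C i j := by
        by_contra hcon
        exact (mem_iInter.1 ht i) (mem_iUnion₂.2 ⟨j, hcon, hj⟩)
      exact ⟨j, phiMat_true_iff.2 (hCavoid i j t hj),
        phiMat_true_iff.2 (hCavoid i j t₀ hj0)⟩
  have h01 : D 0 = D 1 :=
    hloc.apply_eq_of_isPreconnected isPreconnected_univ (mem_univ 0) (mem_univ 1)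
  have e0 : (⟨phiMat x y (H 0), hmem 0⟩ : {M : Fin l → Fin n → Bool //
      NoZeroRow M ∧ ∃ r, IsTotalDiPath n (XM x y M) r}) = ⟨phiMat x y p, h1⟩ := by
    apply Subtype.ext
    show phiMat x y (H 0) = phiMat x y p
    rw [hH0]
  have e1 : (⟨phiMat x y (H 1), hmem 1⟩ : {M : Fin l → Fin n → Bool //
      NoZeroRow M ∧ ∃ r, IsTotalDiPath n (XM x y M) r}) = ⟨phiMat x y q, h2⟩ := by
    apply Subtype.ext
    show phiMat x y (H 1) = phiMat x y q
    rw [hH1]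
  rw [← e0, ← e1]
  exact h01

end Aux4

section Aux5
variable {l n : ℕ}

lemma dihom_quot {x y : Fin l → Fin n → ℝ} (hn : 1 ≤ n)
    (hx : ∀ i j, 0 < x i j) (hxy : ∀ i j, x i j < y i j) (hy1 : ∀ i j, y i j < 1)
    {p q} (h : Dihomotopic n (Xfull x y) p q) :
    (IsTotalDiPath n (Xfull x y) p ↔ IsTotalDiPath n (Xfull x y) q) ∧
    (IsTotalDiPath n (Xfull x y) p →
      ∀ (h1 : NoZeroRow (phiMat x y p) ∧ ∃ r, IsTotalDiPath n (XM x y (phiMat x y p)) r)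
        (h2 : NoZeroRow (phiMat x y q) ∧ ∃ r, IsTotalDiPath n (XM x y (phiMat x y q)) r),
      Quot.mk (fun M N : {M : Fin l → Fin n → Bool //
          NoZeroRow M ∧ ∃ r, IsTotalDiPath n (XM x y M) r} => MatConnected M.1 N.1)
        ⟨phiMat x y p, h1⟩ =
      Quot.mk (fun M N : {M : Fin l → Fin n → Bool //
          NoZeroRow M ∧ ∃ r, IsTotalDiPath n (XM x y M) r} => MatConnected M.1 N.1)
        ⟨phiMat x y q, h2⟩) := by
  induction h with
  | rel a b hab =>
    constructor
    · constructor
      · intro ha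
        exact ⟨hab.2.1, by rw [← hab.2.2.1]; exact ha.2.1, by rw [← hab.2.2.2.1]; exact ha.2.2⟩
      · intro hb
        exact ⟨hab.1, by rw [hab.2.2.1]; exact hb.2.1, by rw [hab.2.2.2.1]; exact hb.2.2⟩
    · intro ha h1 h2
      exact step_quot hn hx hxy hy1 hab ha h1 h2
  | refl a => exact ⟨Iff.rfl, fun _ _ _ => rfl⟩
  | symm a b hab ih =>
    exact ⟨ih.1.symm, fun hb h1 h2 => (ih.2 (ih.1.mpr hb) h2 h1).symm⟩
  | trans a b c hab hbc ih1 ih2 =>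
    refine ⟨ih1.1.trans ih2.1, fun ha h1 h2 => ?_⟩
    have hb := ih1.1.mp ha
    have hmid : NoZeroRow (phiMat x y b) ∧ ∃ r, IsTotalDiPath n (XM x y (phiMat x y b)) r :=
      ⟨noZeroRow_phi hn hx hxy hy1 hb, ⟨b, totalDiPath_XM_phi hb⟩⟩
    exact (ih1.2 ha h1 hmid).trans (ih2.2 hb hmid h2)

lemma eqvGen_dihom {Y : Set (Fin n → ℝ)}
    {a b : {p : unitInterval → Fin n → ℝ // IsTotalDiPath n Y p}}
    (h : Relation.EqvGen (fun p q : {p : unitInterval → Fin n → ℝ //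
        IsTotalDiPath n Y p} => Dihomotopic n Y p.1 q.1) a b) :
    Dihomotopic n Y a.1 b.1 := by
  induction h with
  | rel a b hab => exact hab
  | refl a => exact Relation.EqvGen.refl _
  | symm a b _ ih => exact Relation.EqvGen.symm _ _ ih
  | trans a b c _ _ ih1 ih2 => exact Relation.EqvGen.trans _ _ _ ih1 ih2

end Aux5

theorem stmt7 {l n : ℕ} (hn : 1 ≤ n) (hl : 1 ≤ l)
    (x y : Fin l → Fin n → ℝ)
    (hx : ∀ i j, 0 < x i j) (hxy : ∀ i j, x i j < y i j) (hy1 : ∀ i j, y i j < 1) :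
    ∃ F : Quot (fun M N : {M : Fin l → Fin n → Bool //
            NoZeroRow M ∧ ∃ p, IsTotalDiPath n (XM x y M) p} => MatConnected M.1 N.1) →
          Quot (fun p q : {p : unitInterval → Fin n → ℝ //
            IsTotalDiPath n (Xfull x y) p} => Dihomotopic n (Xfull x y) p.1 q.1),
      Function.Bijective F ∧
      ∀ (M : {M : Fin l → Fin n → Bool //
            NoZeroRow M ∧ ∃ p, IsTotalDiPath n (XM x y M) p})
        (p : {p : unitInterval → Fin n → ℝ // IsTotalDiPath n (Xfull x y) p}),
        IsTotalDiPath n (XM x y M.1) p.1 →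
        F (Quot.mk _ M) = Quot.mk _ p := by
  classical
  set relP := fun p q : {p : unitInterval → Fin n → ℝ //
      IsTotalDiPath n (Xfull x y) p} => Dihomotopic n (Xfull x y) p.1 q.1 with hrelP
  set relM := fun M N : {M : Fin l → Fin n → Bool //
      NoZeroRow M ∧ ∃ p, IsTotalDiPath n (XM x y M) p} => MatConnected M.1 N.1 with hrelM
  set g : {M : Fin l → Fin n → Bool //
      NoZeroRow M ∧ ∃ p, IsTotalDiPath n (XM x y M) p} → Quot relP :=
    fun M => Quot.mk relP ⟨M.2.2.choose,
      isTotalDiPath_mono M.2.2.choose_spec (XM_subset_Xfull M.2.1)⟩ with hgdef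
  have hg : ∀ M N, relM M N → g M = g N := by
    intro M N hMN
    apply Quot.sound
    show Dihomotopic n (Xfull x y) M.2.2.choose N.2.2.choose
    have hLM : matLE (fun i j => M.1 i j && N.1 i j) M.1 := by
      intro i j hij
      rw [Bool.and_eq_true] at hij
      exact hij.1
    have hLN : matLE (fun i j => M.1 i j && N.1 i j) N.1 := by
      intro i j hij
      rw [Bool.and_eq_true] at hij
      exact hij.2
    have hLrow : NoZeroRow (fun i j => M.1 i j && N.1 i j) := by
      intro i
      obtain ⟨j, hj1, hj2⟩ := hMN i
      exact ⟨j, by simp [hj1, hj2]⟩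
    have h1 : IsTotalDiPath n (XM x y (fun i j => M.1 i j && N.1 i j)) M.2.2.choose :=
      isTotalDiPath_mono M.2.2.choose_spec (XM_antitone hLM)
    have h2 : IsTotalDiPath n (XM x y (fun i j => M.1 i j && N.1 i j)) N.2.2.choose :=
      isTotalDiPath_mono N.2.2.choose_spec (XM_antitone hLN)
    exact dihomotopic_mono (dihomotopic_of_XM h1 h2) (XM_subset_Xfull hLrow)
  have hcompat : ∀ (M : {M : Fin l → Fin n → Bool //
        NoZeroRow M ∧ ∃ p, IsTotalDiPath n (XM x y M) p})
      (p : {p : unitInterval → Fin n → ℝ // IsTotalDiPath n (Xfull x y) p}),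
      IsTotalDiPath n (XM x y M.1) p.1 →
      Quot.lift g hg (Quot.mk relM M) = Quot.mk relP p := by
    intro M p hMp
    show g M = Quot.mk relP p
    apply Quot.sound
    show Dihomotopic n (Xfull x y) M.2.2.choose p.1
    exact dihomotopic_mono (dihomotopic_of_XM M.2.2.choose_spec hMp) (XM_subset_Xfull M.2.1)
  refine ⟨Quot.lift g hg, ⟨?_, ?_⟩, hcompat⟩
  · -- injective
    intro a b hab
    induction a using Quot.ind with
    | _ M =>
    induction b using Quot.ind with
    | _ N =>
    have hab' : g M = g N := hab
    have hd : Dihomotopic n (Xfull x y) M.2.2.choose N.2.2.choose :=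
      eqvGen_dihom (Quot.eq.1 hab')
    have hpM : IsTotalDiPath n (Xfull x y) M.2.2.choose :=
      isTotalDiPath_mono M.2.2.choose_spec (XM_subset_Xfull M.2.1)
    have hpN : IsTotalDiPath n (Xfull x y) N.2.2.choose :=
      isTotalDiPath_mono N.2.2.choose_spec (XM_subset_Xfull N.2.1)
    have hphiM : NoZeroRow (phiMat x y M.2.2.choose) ∧
        ∃ r, IsTotalDiPath n (XM x y (phiMat x y M.2.2.choose)) r :=
      ⟨noZeroRow_phi hn hx hxy hy1 hpM, ⟨M.2.2.choose, totalDiPath_XM_phi hpM⟩⟩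
    have hphiN : NoZeroRow (phiMat x y N.2.2.choose) ∧
        ∃ r, IsTotalDiPath n (XM x y (phiMat x y N.2.2.choose)) r :=
      ⟨noZeroRow_phi hn hx hxy hy1 hpN, ⟨N.2.2.choose, totalDiPath_XM_phi hpN⟩⟩
    have hstep := (dihom_quot hn hx hxy hy1 hd).2 hpM hphiM hphiN
    have hM : Quot.mk relM M = Quot.mk relM ⟨phiMat x y M.2.2.choose, hphiM⟩ := by
      apply Quot.sound
      intro i
      obtain ⟨j, hj⟩ := M.2.1 i
      refine ⟨j, hj, phiMat_true_iff.2 fun u hu => ?_⟩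
      exact (mem_XM_iff.1 (M.2.2.choose_spec.1.2.1 u)).2 i j hj hu
    have hN : Quot.mk relM N = Quot.mk relM ⟨phiMat x y N.2.2.choose, hphiN⟩ := by
      apply Quot.sound
      intro i
      obtain ⟨j, hj⟩ := N.2.1 i
      refine ⟨j, hj, phiMat_true_iff.2 fun u hu => ?_⟩
      exact (mem_XM_iff.1 (N.2.2.choose_spec.1.2.1 u)).2 i j hj hu
    exact hM.trans (hstep.trans hN.symm)
  · -- surjective
    intro pc
    induction pc using Quot.ind with
    | _ p =>
    refine ⟨Quot.mk relM ⟨phiMat x y p.1,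
      ⟨noZeroRow_phi hn hx hxy hy1 p.2, ⟨p.1, totalDiPath_XM_phi p.2⟩⟩⟩, ?_⟩
    exact hcompat _ p (totalDiPath_XM_phi p.2)
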